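/- Let S and T be adjacency trees and let f : S → T be a map such that s ≤ s' implies f(s) ≤ f(s') and s ∼ s' implies f(s) ∼ f(s'). Then f also reflects order and adjacency: f(s) ≤ f(s') implies s ≤ s', and f(s) ∼ f(s') implies s ∼ s'. (In particular f is injective.) -/
import Mathlib


/-- The adjacency relation on a partially ordered set:
`t ∼ t'` iff `t ≠ t'` and `t, t'` have the same strict lower cones. -/
def TreeAdj {T : Type*} [PartialOrder T] (t t' : T) : Prop :=
  t ≠ t' ∧ ∀ s : T, s < t ↔ s < t'

/-- An adjacency tree: a tree (down-sets are linearly ordered) in which every element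
has an adjacent element, and every two incomparable elements have an adjacency
envelope. -/
def IsAdjacencyTree (T : Type*) [PartialOrder T] : Prop :=
  (∀ x y t : T, x ≤ t → y ≤ t → x ≤ y ∨ y ≤ x) ∧
  (∀ t : T, ∃ t' : T, TreeAdj t t') ∧
  (∀ t t' : T, ¬ t ≤ t' → ¬ t' ≤ t →
    ∃ e e' : T, e ≤ t ∧ e' ≤ t' ∧ TreeAdj e e')

/-- A map between adjacency trees that preserves order and adjacency automatically
reflects order and adjacency (and in particular is injective). -/
theorem stmt6 {S T : Type*} [PartialOrder S] [PartialOrder T]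
    (hS : IsAdjacencyTree S) (hT : IsAdjacencyTree T) (f : S → T)
    (hmono : ∀ s s' : S, s ≤ s' → f s ≤ f s')
    (hadj : ∀ s s' : S, TreeAdj s s' → TreeAdj (f s) (f s')) :
    (∀ s s' : S, f s ≤ f s' → s ≤ s') ∧
    (∀ s s' : S, TreeAdj (f s) (f s') → TreeAdj s s') ∧
    Function.Injective f := by
  -- adjacent elements are incomparable
  have adjnle : ∀ {x y : T}, TreeAdj x y → ¬ x ≤ y := by
    rintro x y ⟨hne, hc⟩ hle
    exact lt_irrefl x ((hc x).mpr (lt_of_le_of_ne hle hne))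
  -- injectivity
  have hinj : Function.Injective f := by
    intro a b hfab
    by_contra hne
    by_cases hab : a ≤ b
    · obtain ⟨u, hbu⟩ := hS.2.1 b
      have hau : a < u := (hbu.2 a).mp (lt_of_le_of_ne hab hne)
      have h1 : f a ≤ f u := hmono _ _ hau.le
      rw [hfab] at h1
      exact adjnle (hadj b u hbu) h1
    · by_cases hba : b ≤ a
      · obtain ⟨u, hau⟩ := hS.2.1 a
        have hbu : b < u := (hau.2 b).mp (lt_of_le_of_ne hba (Ne.symm hne))
        have h1 : f b ≤ f u := hmono _ _ hbu.le
        rw [← hfab] at h1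
        exact adjnle (hadj a u hau) h1
      · obtain ⟨e, e', he, he', hee⟩ := hS.2.2 a b hab hba
        have hTa := hadj _ _ hee
        have h1 : f e ≤ f b := hfab ▸ hmono _ _ he
        have h2 : f e' ≤ f b := hmono _ _ he'
        rcases hT.1 _ _ _ h1 h2 with h | h
        · exact adjnle hTa h
        · exact adjnle ⟨Ne.symm hTa.1, fun s => (hTa.2 s).symm⟩ h
  -- order reflection
  have hrefl : ∀ s s' : S, f s ≤ f s' → s ≤ s' := by
    intro s s' h
    by_contra hns
    by_cases hsn : s' ≤ s
    · exact hns (hinj (le_antisymm h (hmono _ _ hsn))).le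
    · obtain ⟨e, e', he, he', hee⟩ := hS.2.2 s s' hns hsn
      have hTa := hadj _ _ hee
      have h1 : f e ≤ f s' := le_trans (hmono _ _ he) h
      have h2 : f e' ≤ f s' := hmono _ _ he'
      rcases hT.1 _ _ _ h1 h2 with hc | hc
      · exact adjnle hTa hc
      · exact adjnle ⟨Ne.symm hTa.1, fun x => (hTa.2 x).symm⟩ hc
  refine ⟨hrefl, ?_, hinj⟩
  rintro s s' ⟨hne, hc⟩
  refine ⟨fun h => hne (h ▸ rfl), fun u => ?_⟩
  constructor
  · intro hu
    have h1 : f u < f s := lt_of_le_of_ne (hmono _ _ hu.le) (fun h => hu.ne (hinj h))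
    have h2 : f u < f s' := (hc _).mp h1
    exact lt_of_le_of_ne (hrefl _ _ h2.le) (fun h => h2.ne (h ▸ rfl))
  · intro hu
    have h1 : f u < f s' := lt_of_le_of_ne (hmono _ _ hu.le) (fun h => hu.ne (hinj h))
    have h2 : f u < f s := (hc _).mpr h1
    exact lt_of_le_of_ne (hrefl _ _ h2.le) (fun h => h2.ne (h ▸ rfl))
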